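/- Let U = (U_{ij}) be an n × n Haar distributed unitary random matrix, let h be a positive integer, let i_1, …, i_h, j_1, …, j_h ∈ {1, …, n}, and let k_1, …, k_h, m_1, …, m_h be positive integers. If there exists some u with 1 ≤ u ≤ n such that Σ_{r : i_r = u} (k_r − m_r) ≠ 0, or some v with 1 ≤ v ≤ n such that Σ_{r : j_r = v} (k_r − m_r) ≠ 0, then E( (U_{i_1 j_1}^{k_1} · conj(U_{i_1 j_1})^{m_1}) ⋯ (U_{i_h j_h}^{k_h} · conj(U_{i_h j_h})^{m_h}) ) = 0. -/

import Mathlib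

open MeasureTheory ProbabilityTheory Finset

noncomputable instance Matrix.measurableSpace {m n α : Type*} [MeasurableSpace α] :
    MeasurableSpace (Matrix m n α) :=
  (inferInstance : MeasurableSpace (m → n → α))

namespace Stmt6Aux

abbrev G (n : ℕ) := ↥(Matrix.unitaryGroup (Fin n) ℂ)

variable {n h : ℕ}

lemma meas_entry (a b : Fin n) :
    Measurable fun U : G n => (U : Matrix (Fin n) (Fin n) ℂ) a b :=
  (measurable_pi_apply b).comp ((measurable_pi_apply a).comp measurable_subtype_coe)

lemma meas_mul : Measurable fun p : G n × G n => p.1 * p.2 := by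
  have hval : Measurable fun p : G n × G n =>
      ((p.1 : Matrix (Fin n) (Fin n) ℂ) * (p.2 : Matrix (Fin n) (Fin n) ℂ)) := by
    apply measurable_pi_lambda; intro a; apply measurable_pi_lambda; intro b
    simp only [Matrix.mul_apply]
    exact Finset.measurable_sum _ fun c _ =>
      ((meas_entry a c).comp measurable_fst).mul ((meas_entry c b).comp measurable_snd)
  exact Measurable.subtype_mk hval

lemma meas_inv : Measurable fun U : G n => U⁻¹ := by
  have hval : Measurable fun U : G n => (star (U : Matrix (Fin n) (Fin n) ℂ)) := by
    apply measurable_pi_lambda; intro a; apply measurable_pi_lambda; intro b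
    simp only [Matrix.star_apply, RCLike.star_def]
    exact (RCLike.continuous_conj (K := ℂ)).measurable.comp (meas_entry b a)
  exact Measurable.subtype_mk hval

/-- The integrand. -/
def intg (i j : Fin h → Fin n) (k m : Fin h → ℕ) (U : G n) : ℂ :=
  ∏ r : Fin h,
    ((U : Matrix (Fin n) (Fin n) ℂ) (i r) (j r)) ^ (k r) *
      (starRingEnd ℂ ((U : Matrix (Fin n) (Fin n) ℂ) (i r) (j r))) ^ (m r)

lemma meas_intg (i j : Fin h → Fin n) (k m : Fin h → ℕ) :
    Measurable (intg i j k m) := by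
  apply Finset.measurable_prod
  intro r _
  exact ((meas_entry (i r) (j r)).pow_const _).mul
    (((RCLike.continuous_conj (K := ℂ)).measurable.comp (meas_entry (i r) (j r))).pow_const _)

lemma norm_intg_le (i j : Fin h → Fin n) (k m : Fin h → ℕ) (U : G n) :
    ‖intg i j k m U‖ ≤ 1 := by
  rw [intg, norm_prod]
  apply Finset.prod_le_one (fun r _ => norm_nonneg _)
  intro r _
  have hb : ‖(U : Matrix (Fin n) (Fin n) ℂ) (i r) (j r)‖ ≤ 1 :=
    entry_norm_bound_of_unitary U.2 _ _
  rw [norm_mul, norm_pow, norm_pow, RCLike.norm_conj]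
  exact mul_le_one₀ (pow_le_one₀ (norm_nonneg _) hb) (pow_nonneg (norm_nonneg _) _)
    (pow_le_one₀ (norm_nonneg _) hb)

lemma zpow_sum₀ {α : Type*} {z : ℂ} (hz : z ≠ 0) (s : Finset α) (f : α → ℤ) :
    z ^ (∑ r ∈ s, f r) = ∏ r ∈ s, z ^ f r := by
  classical
  induction s using Finset.induction with
  | empty => simp
  | insert _ _ hs ih => rw [Finset.sum_insert hs, Finset.prod_insert hs, zpow_add₀ hz, ih]

lemma exists_phase (s : ℤ) (hs : s ≠ 0) :
    ∃ z : ℂ, z * starRingEnd ℂ z = 1 ∧ z ^ s = -1 := by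
  refine ⟨Complex.exp ((Real.pi / s : ℝ) * Complex.I), ?_, ?_⟩
  · rw [Complex.mul_conj]
    norm_cast
    rw [Complex.normSq_eq_norm_sq, Complex.norm_exp_ofReal_mul_I, one_pow]
  · rw [← Complex.exp_int_mul]
    have hs' : (s : ℂ) ≠ 0 := Int.cast_ne_zero.mpr hs
    rw [show (s : ℂ) * (((Real.pi / s : ℝ) : ℂ) * Complex.I) = (Real.pi : ℂ) * Complex.I by
      push_cast; field_simp]
    exact Complex.exp_pi_mul_I

lemma diag_mem (d : Fin n → ℂ) (hd : ∀ a, d a * starRingEnd ℂ (d a) = 1) :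
    Matrix.diagonal d ∈ Matrix.unitaryGroup (Fin n) ℂ := by
  rw [Matrix.mem_unitaryGroup_iff, Matrix.star_eq_conjTranspose,
    Matrix.diagonal_conjTranspose, Matrix.diagonal_mul_diagonal, ← Matrix.diagonal_one]
  have hds : (fun i => d i * star d i) = fun _ : Fin n => (1 : ℂ) := funext fun a => by
    simpa [RCLike.star_def] using hd a
  rw [hds]

lemma row_scale (i j : Fin h → Fin n) (k m : Fin h → ℕ) (d : Fin n → ℂ)
    (hd : Matrix.diagonal d ∈ Matrix.unitaryGroup (Fin n) ℂ) (U : G n) :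
    intg i j k m ((⟨Matrix.diagonal d, hd⟩ : G n) * U) =
      (∏ r, d (i r) ^ (k r) * starRingEnd ℂ (d (i r)) ^ (m r)) * intg i j k m U := by
  rw [intg, intg, ← Finset.prod_mul_distrib]
  apply Finset.prod_congr rfl
  intro r _
  have hc : (((⟨Matrix.diagonal d, hd⟩ : G n) * U : G n) : Matrix (Fin n) (Fin n) ℂ)
      = Matrix.diagonal d * (U : Matrix (Fin n) (Fin n) ℂ) := rfl
  rw [hc, Matrix.diagonal_mul, mul_pow, map_mul, mul_pow]
  ring

lemma col_scale (i j : Fin h → Fin n) (k m : Fin h → ℕ) (d : Fin n → ℂ)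
    (hd : Matrix.diagonal d ∈ Matrix.unitaryGroup (Fin n) ℂ) (U : G n) :
    intg i j k m (U * (⟨Matrix.diagonal d, hd⟩ : G n)) =
      (∏ r, d (j r) ^ (k r) * starRingEnd ℂ (d (j r)) ^ (m r)) * intg i j k m U := by
  rw [intg, intg, ← Finset.prod_mul_distrib]
  apply Finset.prod_congr rfl
  intro r _
  have hc : ((U * (⟨Matrix.diagonal d, hd⟩ : G n) : G n) : Matrix (Fin n) (Fin n) ℂ)
      = (U : Matrix (Fin n) (Fin n) ℂ) * Matrix.diagonal d := rfl
  rw [hc, Matrix.mul_diagonal, mul_pow, map_mul, mul_pow]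
  ring

lemma prod_phase (i : Fin h → Fin n) (k m : Fin h → ℕ) (u : Fin n) {z : ℂ}
    (hz : z * starRingEnd ℂ z = 1) :
    (∏ r, (if i r = u then z else 1) ^ (k r) *
        starRingEnd ℂ (if i r = u then z else 1) ^ (m r))
      = z ^ (∑ r ∈ univ.filter (fun r => i r = u), ((k r : ℤ) - (m r : ℤ))) := by
  have hz0 : z ≠ 0 := left_ne_zero_of_mul_eq_one hz
  have hzinv : starRingEnd ℂ z = z⁻¹ :=
    eq_inv_of_mul_eq_one_left (by rw [mul_comm] at hz; exact hz)
  rw [zpow_sum₀ hz0, Finset.prod_filter]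
  apply Finset.prod_congr rfl
  intro r _
  by_cases hir : i r = u
  · simp only [hir, if_pos]
    rw [hzinv, zpow_sub₀ hz0, div_eq_mul_inv, zpow_natCast, zpow_natCast, inv_pow]
  · simp [hir]

end Stmt6Aux

set_option maxHeartbeats 1000000 in
/-- Lemma 3 of the paper: for a Haar distributed unitary matrix `U` (the Haar measure being
the left-invariant Borel probability measure on the unitary group), indices
`i₁,…,i_h, j₁,…,j_h` and positive exponents `k₁,…,k_h, m₁,…,m_h`, if for some row index `u`
(or some column index `v`) the total degree `Σ_{r : i_r = u} (k_r - m_r)` is nonzero, then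
`E(∏_r U_{i_r j_r}^{k_r} conj(U_{i_r j_r})^{m_r}) = 0`. -/
theorem stmt6 (n h : ℕ) (hpos : 0 < h)
    (μ : Measure ↥(Matrix.unitaryGroup (Fin n) ℂ)) [IsProbabilityMeasure μ]
    (hinv : ∀ V : ↥(Matrix.unitaryGroup (Fin n) ℂ),
      Measure.map (fun U => V * U) μ = μ)
    (i j : Fin h → Fin n) (k m : Fin h → ℕ)
    (hk : ∀ r, 0 < k r) (hm : ∀ r, 0 < m r)
    (himb : (∃ u : Fin n,
        ∑ r ∈ univ.filter (fun r => i r = u), ((k r : ℤ) - (m r : ℤ)) ≠ 0) ∨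
      (∃ v : Fin n,
        ∑ r ∈ univ.filter (fun r => j r = v), ((k r : ℤ) - (m r : ℤ)) ≠ 0)) :
    ∫ U : ↥(Matrix.unitaryGroup (Fin n) ℂ),
      ∏ r : Fin h,
        ((U : Matrix (Fin n) (Fin n) ℂ) (i r) (j r)) ^ (k r) *
          (starRingEnd ℂ ((U : Matrix (Fin n) (Fin n) ℂ) (i r) (j r))) ^ (m r) ∂μ
      = 0 := by
  classical
  show ∫ U, Stmt6Aux.intg i j k m U ∂μ = 0
  set f := Stmt6Aux.intg i j k m with hfdef
  have hfm : Measurable f := Stmt6Aux.meas_intg i j k m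
  -- the bi-invariant measure ν
  let gmap : Stmt6Aux.G n × Stmt6Aux.G n → Stmt6Aux.G n := fun p => p.1 * p.2⁻¹
  have hgm : Measurable gmap :=
    Stmt6Aux.meas_mul.comp (measurable_fst.prodMk (Stmt6Aux.meas_inv.comp measurable_snd))
  let ν : Measure (Stmt6Aux.G n) := Measure.map gmap (μ.prod μ)
  have hνp : IsProbabilityMeasure ν := Measure.isProbabilityMeasure_map hgm.aemeasurable
  have hmulL : ∀ V : Stmt6Aux.G n, Measurable fun U : Stmt6Aux.G n => V * U := fun V =>
    Stmt6Aux.meas_mul.comp (measurable_const.prodMk measurable_id)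
  have hmulR : ∀ V : Stmt6Aux.G n, Measurable fun U : Stmt6Aux.G n => U * V := fun V =>
    Stmt6Aux.meas_mul.comp (measurable_id.prodMk measurable_const)
  have hνL : ∀ V, Measure.map (fun U => V * U) ν = ν := by
    intro V
    show Measure.map _ (Measure.map gmap (μ.prod μ)) = _
    rw [Measure.map_map (hmulL V) hgm]
    have hcomp : (fun U => V * U) ∘ gmap = gmap ∘ (Prod.map (fun U => V * U) id) := by
      funext p
      simp [gmap, Prod.map, mul_assoc]
    rw [hcomp, ← Measure.map_map hgm ((hmulL V).prodMap measurable_id),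
      ← Measure.map_prod_map _ _ (hmulL V) measurable_id, hinv V, Measure.map_id]
  have hνR : ∀ V, Measure.map (fun U => U * V) ν = ν := by
    intro V
    show Measure.map _ (Measure.map gmap (μ.prod μ)) = _
    rw [Measure.map_map (hmulR V) hgm]
    have hcomp : (fun U => U * V) ∘ gmap = gmap ∘ (Prod.map id (fun U => V⁻¹ * U)) := by
      funext p
      simp [gmap, Prod.map, mul_inv_rev, mul_assoc]
    rw [hcomp, ← Measure.map_map hgm (measurable_id.prodMap (hmulL V⁻¹)),
      ← Measure.map_prod_map _ _ measurable_id (hmulL V⁻¹), hinv V⁻¹, Measure.map_id]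
  have hIμ : ∀ V, ∫ U, f (V * U) ∂μ = ∫ U, f U ∂μ := by
    intro V
    rw [← integral_map (hmulL V).aemeasurable hfm.aestronglyMeasurable, hinv V]
  have hIνR : ∀ V, ∫ U, f (U * V) ∂ν = ∫ U, f U ∂ν := by
    intro V
    rw [← integral_map (hmulR V).aemeasurable hfm.aestronglyMeasurable, hνR V]
  have hIνL : ∀ V, ∫ U, f (V * U) ∂ν = ∫ U, f U ∂ν := by
    intro V
    rw [← integral_map (hmulL V).aemeasurable hfm.aestronglyMeasurable, hνL V]
  have hInt : Integrable (Function.uncurry fun v u : Stmt6Aux.G n => f (v * u)) (ν.prod μ) := by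
    refine ⟨(hfm.comp Stmt6Aux.meas_mul).aestronglyMeasurable, ?_⟩
    exact HasFiniteIntegral.of_bounded (C := 1)
      (Filter.Eventually.of_forall fun p => Stmt6Aux.norm_intg_le i j k m _)
  have hμν : ∫ U, f U ∂μ = ∫ U, f U ∂ν := by
    have h1 : ∫ v, ∫ u, f (v * u) ∂μ ∂ν = ∫ U, f U ∂μ := by
      rw [integral_congr_ae (Filter.Eventually.of_forall fun v => hIμ v)]
      simp
    have h2 : ∫ v, ∫ u, f (v * u) ∂μ ∂ν = ∫ u, ∫ v, f (v * u) ∂ν ∂μ :=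
      integral_integral_swap hInt
    have h3 : ∫ u, ∫ v, f (v * u) ∂ν ∂μ = ∫ U, f U ∂ν := by
      rw [integral_congr_ae (Filter.Eventually.of_forall fun u => hIνR u)]
      simp
    rw [← h1, h2, h3]
  rw [hμν]
  rcases himb with ⟨u, hu⟩ | ⟨v, hv⟩
  · obtain ⟨z, hz1, hzs⟩ := Stmt6Aux.exists_phase _ hu
    have hd1 : ∀ a : Fin n, (if a = u then z else 1) * starRingEnd ℂ (if a = u then z else 1) = 1 := by
      intro a; by_cases ha : a = u <;> simp [ha, hz1]
    have hdm : Matrix.diagonal (fun a => if a = u then z else 1) ∈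
        Matrix.unitaryGroup (Fin n) ℂ := Stmt6Aux.diag_mem _ hd1
    have hscale : ∀ U : Stmt6Aux.G n,
        f ((⟨Matrix.diagonal _, hdm⟩ : Stmt6Aux.G n) * U) = (-1) * f U := by
      intro U
      rw [hfdef, Stmt6Aux.row_scale i j k m _ hdm U]
      congr 1
      rw [Stmt6Aux.prod_phase i k m u hz1, hzs]
    have h5 : ∫ U, f U ∂ν = -∫ U, f U ∂ν := by
      conv_lhs => rw [← hIνL ⟨Matrix.diagonal _, hdm⟩]
      simp_rw [hscale, neg_one_mul]
      exact integral_neg _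
    linear_combination h5 / 2
  · obtain ⟨z, hz1, hzs⟩ := Stmt6Aux.exists_phase _ hv
    have hd1 : ∀ a : Fin n, (if a = v then z else 1) * starRingEnd ℂ (if a = v then z else 1) = 1 := by
      intro a; by_cases ha : a = v <;> simp [ha, hz1]
    have hdm : Matrix.diagonal (fun a => if a = v then z else 1) ∈
        Matrix.unitaryGroup (Fin n) ℂ := Stmt6Aux.diag_mem _ hd1
    have hscale : ∀ U : Stmt6Aux.G n,
        f (U * (⟨Matrix.diagonal _, hdm⟩ : Stmt6Aux.G n)) = (-1) * f U := by
      intro U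
      rw [hfdef, Stmt6Aux.col_scale i j k m _ hdm U]
      congr 1
      rw [Stmt6Aux.prod_phase j k m v hz1, hzs]
    have h5 : ∫ U, f U ∂ν = -∫ U, f U ∂ν := by
      conv_lhs => rw [← hIνR ⟨Matrix.diagonal _, hdm⟩]
      simp_rw [hscale, neg_one_mul]
      exact integral_neg _
    linear_combination h5 / 2
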